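/- Every Noetherian ℤ-torsion (t−1)-invertible Λ-module is finitely generated as an abelian group (i.e., as a ℤ-module). -/

import Mathlib

open Polynomial

/-- `Λ` is the ring `ℤ[t,t⁻¹]` of Laurent polynomials with integer coefficients. -/
abbrev Λ : Type := LaurentPolynomial ℤ

/-- `tL` is the element `t` of `Λ = ℤ[t,t⁻¹]`. -/
noncomputable def tL : Λ := LaurentPolynomial.T 1

/-- Augmentation: the ring map `Λ → ℤ` sending `T ↦ 1`. -/
noncomputable def eps : Λ →ₐ[ℤ] ℤ := AddMonoidAlgebra.lift ℤ ℤ ℤ 1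

lemma eps_single (n : ℤ) (a : ℤ) : eps (AddMonoidAlgebra.single n a) = a := by
  rw [eps, AddMonoidAlgebra.lift_single]; simp

lemma eps_T (n : ℤ) : eps (LaurentPolynomial.T n) = 1 := eps_single n 1

lemma eps_C (a : ℤ) : eps (LaurentPolynomial.C a) = a := eps_single 0 a

lemma eps_toLaurent (f : ℤ[X]) : eps (Polynomial.toLaurent f) = f.eval 1 := by
  induction f using Polynomial.induction_on' with
  | add p q hp hq => simp [hp, hq]
  | monomial n a =>
      rw [Polynomial.toLaurent_C_mul_T, map_mul, eps_C, eps_T]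
      simp

section Aux

variable {M : Type} [AddCommGroup M]

lemma zsmul_congr (p : ℕ) (htor : ∀ v : M, p • v = 0)
    (a b : ℤ) (h : (p : ℤ) ∣ a - b) (v : M) : a • v = b • v := by
  obtain ⟨c, hc⟩ := h
  have h2 : (a - b) • v = 0 := by
    rw [hc, mul_smul, natCast_zsmul, htor]
  have h3 := sub_smul a b v
  rw [h2] at h3
  exact (sub_eq_zero.mp h3.symm)

variable [Module Λ M]

lemma smul_T_smul (a b : ℤ) (v : M) :
    (LaurentPolynomial.T a : Λ) • (LaurentPolynomial.T b : Λ) • v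
      = (LaurentPolynomial.T (a + b) : Λ) • v := by
  rw [← mul_smul, ← LaurentPolynomial.T_add]

end Aux

open LaurentPolynomial in
lemma finite_of_poly (M : Type) [AddCommGroup M] [Module Λ M] [Module.Finite Λ M]
    (p : ℕ) (hp : p.Prime) (htor : ∀ v : M, p • v = 0)
    (W : ℤ[X]) (hW1 : W.eval 1 = 1)
    (hWann : ∀ v : M, (Polynomial.toLaurent W) • v = 0) :
    Module.Finite ℤ M := by
  classical
  set d := W.natDegree with hd
  -- the basic relation
  have hrel : ∀ v : M,
      ∑ j ∈ Finset.range (d + 1), W.coeff j • ((T (j : ℤ) : Λ) • v) = 0 := by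
    intro v
    have h0 := hWann v
    conv_lhs at h0 => rw [Polynomial.as_sum_range' W (d+1) (by omega)]
    rw [map_sum, Finset.sum_smul] at h0
    rw [← h0]
    apply Finset.sum_congr rfl
    intro j hj
    rw [Polynomial.toLaurent_C_mul_T, mul_smul, LaurentPolynomial.C_eq_algebraMap,
      algebraMap_smul]
  -- the set of indices with coefficient not divisible by p
  set s : Finset ℕ := (Finset.range (d + 1)).filter (fun j => ¬ (p : ℤ) ∣ W.coeff j) with hs
  have hs_ne : s.Nonempty := by
    by_contra h
    rw [Finset.not_nonempty_iff_eq_empty, Finset.filter_eq_empty_iff] at h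
    have hdvd : (p : ℤ) ∣ W.eval 1 := by
      rw [Polynomial.eval_eq_sum_range]
      refine Finset.dvd_sum ?_
      intro j hj
      have := h hj
      rw [not_not] at this
      simpa using this
    rw [hW1] at hdvd
    have h1 : (p : ℤ) = 1 := Int.eq_one_of_dvd_one (by positivity) hdvd
    have := hp.one_lt
    omega
  set m := s.max' hs_ne with hm
  set l := s.min' hs_ne with hl
  have hm_mem : m ∈ s := s.max'_mem hs_ne
  have hl_mem : l ∈ s := s.min'_mem hs_ne
  have hm_ndvd : ¬ (p : ℤ) ∣ W.coeff m := (Finset.mem_filter.mp hm_mem).2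
  have hl_ndvd : ¬ (p : ℤ) ∣ W.coeff l := (Finset.mem_filter.mp hl_mem).2
  have hlm : l ≤ m := s.min'_le _ hm_mem
  -- inverses mod p
  have hcop : ∀ a : ℤ, ¬ (p : ℤ) ∣ a → ∃ e : ℤ, (p : ℤ) ∣ e * a - 1 := by
    intro a ha
    have hpp : Prime (p : ℤ) := Nat.prime_iff_prime_int.mp hp
    obtain ⟨u, v, huv⟩ := (hpp.coprime_iff_not_dvd.mpr ha)
    exact ⟨v, ⟨-u, by linarith⟩⟩
  -- the relation supported on s
  have hrel2 : ∀ v : M, ∑ j ∈ s, W.coeff j • ((T (j : ℤ) : Λ) • v) = 0 := by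
    intro v
    rw [← hrel v]
    apply Finset.sum_subset (Finset.filter_subset _ _)
    intro j hj hjs
    have hdvd : (p : ℤ) ∣ W.coeff j := by
      by_contra hcon
      exact hjs (Finset.mem_filter.mpr ⟨hj, hcon⟩)
    rw [zsmul_congr p htor (W.coeff j) 0 (by simpa using hdvd), zero_smul]
  -- reduction at the top
  have htop : ∀ v : M, (T (m : ℤ) : Λ) • v ∈
      Submodule.span ℤ ((fun j : ℤ => (T j : Λ) • v) '' {j : ℤ | (l : ℤ) ≤ j ∧ j < (m : ℤ)}) := by
    intro v
    obtain ⟨e, he⟩ := hcop _ hm_ndvd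
    have h1 : (T (m : ℤ) : Λ) • v = (e * W.coeff m) • ((T (m : ℤ) : Λ) • v) := by
      rw [zsmul_congr p htor (e * W.coeff m) 1 (by simpa using he), one_smul]
    have h2 : W.coeff m • ((T (m : ℤ) : Λ) • v)
        = - ∑ j ∈ s.erase m, W.coeff j • ((T (j : ℤ) : Λ) • v) := by
      have h3 := hrel2 v
      rw [← Finset.add_sum_erase _ _ hm_mem] at h3
      exact eq_neg_of_add_eq_zero_left h3
    rw [h1, mul_smul, h2, smul_neg]
    refine Submodule.neg_mem _ (Submodule.smul_mem _ _ (Submodule.sum_mem _ ?_))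
    intro j hj
    refine Submodule.smul_mem _ _ (Submodule.subset_span ?_)
    have hjm : j ≠ m := Finset.ne_of_mem_erase hj
    have hjs : j ∈ s := Finset.mem_of_mem_erase hj
    have h4 : l ≤ j := s.min'_le _ hjs
    have h5 : j ≤ m := s.le_max' _ hjs
    exact ⟨(j : ℤ), ⟨by exact_mod_cast h4, by omega⟩, rfl⟩
  -- reduction at the bottom
  have hbot : ∀ v : M, (T (l : ℤ) : Λ) • v ∈
      Submodule.span ℤ ((fun j : ℤ => (T j : Λ) • v) '' {j : ℤ | (l : ℤ) < j ∧ j ≤ (m : ℤ)}) := by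
    intro v
    obtain ⟨e, he⟩ := hcop _ hl_ndvd
    have h1 : (T (l : ℤ) : Λ) • v = (e * W.coeff l) • ((T (l : ℤ) : Λ) • v) := by
      rw [zsmul_congr p htor (e * W.coeff l) 1 (by simpa using he), one_smul]
    have h2 : W.coeff l • ((T (l : ℤ) : Λ) • v)
        = - ∑ j ∈ s.erase l, W.coeff j • ((T (j : ℤ) : Λ) • v) := by
      have h3 := hrel2 v
      rw [← Finset.add_sum_erase _ _ hl_mem] at h3
      exact eq_neg_of_add_eq_zero_left h3
    rw [h1, mul_smul, h2, smul_neg]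
    refine Submodule.neg_mem _ (Submodule.smul_mem _ _ (Submodule.sum_mem _ ?_))
    intro j hj
    refine Submodule.smul_mem _ _ (Submodule.subset_span ?_)
    have hjl : j ≠ l := Finset.ne_of_mem_erase hj
    have hjs : j ∈ s := Finset.mem_of_mem_erase hj
    have h4 : l ≤ j := s.min'_le _ hjs
    have h5 : j ≤ m := s.le_max' _ hjs
    exact ⟨(j : ℤ), ⟨by omega, by exact_mod_cast h5⟩, rfl⟩
  -- every translate lies in the span of the window
  have hwin : ∀ (v : M) (n : ℤ), (T n : Λ) • v ∈
      Submodule.span ℤ ((fun j : ℤ => (T j : Λ) • v) '' Set.Icc (l : ℤ) (m : ℤ)) := by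
    intro v
    have main : ∀ k : ℕ, ∀ (u : M) (n : ℤ), (l : ℤ) - k ≤ n → n ≤ (m : ℤ) + k →
        (T n : Λ) • u ∈
          Submodule.span ℤ ((fun j : ℤ => (T j : Λ) • u) '' Set.Icc (l : ℤ) (m : ℤ)) := by
      intro k
      induction k with
      | zero =>
          intro u n h1 h2
          exact Submodule.subset_span ⟨n, ⟨by simpa using h1, by simpa using h2⟩, rfl⟩
      | succ k ih =>
          intro u n h1 h2
          by_cases hin : (l : ℤ) - k ≤ n ∧ n ≤ (m : ℤ) + k
          · exact ih u n hin.1 hin.2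
          · have hcase : n = (m : ℤ) + k + 1 ∨ n = (l : ℤ) - k - 1 := by omega
            rcases hcase with hcase | hcase
            · have heq : (T n : Λ) • u = (T (m : ℤ) : Λ) • ((T (n - m) : Λ) • u) := by
                rw [smul_T_smul, show (m : ℤ) + (n - m) = n from by omega]
              rw [heq]
              refine Submodule.span_le.mpr ?_ (htop ((T (n - (m : ℤ)) : Λ) • u))
              rintro x ⟨j, ⟨hj1, hj2⟩, rfl⟩
              simp only
              rw [smul_T_smul]
              have hgoal : (l : ℤ) - k ≤ j + (n - m) ∧ j + (n - m) ≤ (m:ℤ) + k := by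
                constructor <;> omega
              exact ih u (j + (n - m)) hgoal.1 hgoal.2
            · have heq : (T n : Λ) • u = (T (l : ℤ) : Λ) • ((T (n - l) : Λ) • u) := by
                rw [smul_T_smul, show (l : ℤ) + (n - l) = n from by omega]
              rw [heq]
              refine Submodule.span_le.mpr ?_ (hbot ((T (n - (l : ℤ)) : Λ) • u))
              rintro x ⟨j, ⟨hj1, hj2⟩, rfl⟩
              simp only
              rw [smul_T_smul]
              exact ih u (j + (n - l)) (by omega) (by omega)
    intro n
    exact main ((l - n).toNat + (n - m).toNat) v n (by omega) (by omega)
  -- assemble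
  obtain ⟨G, hG⟩ := (inferInstance : Module.Finite Λ M).fg_top
  set F : Finset M := (G ×ˢ Finset.Icc l m).image
      (fun q => (T ((q.2 : ℕ) : ℤ) : Λ) • q.1) with hF
  have hFsub : ∀ v ∈ G,
      Submodule.span ℤ ((fun j : ℤ => (T j : Λ) • v) '' Set.Icc (l : ℤ) (m : ℤ))
        ≤ Submodule.span ℤ (F : Set M) := by
    intro v hv
    apply Submodule.span_le.mpr
    rintro x ⟨j, ⟨hj1, hj2⟩, rfl⟩
    apply Submodule.subset_span
    rw [hF, Finset.coe_image]
    refine ⟨(v, j.toNat), ?_, ?_⟩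
    · rw [Finset.mem_coe, Finset.mem_product]
      exact ⟨hv, Finset.mem_Icc.mpr ⟨by omega, by omega⟩⟩
    · simp only
      congr 1
      congr 1
      omega
  have hstable : ∀ (n : ℤ) (x : M), x ∈ Submodule.span ℤ (F : Set M) →
      (T n : Λ) • x ∈ Submodule.span ℤ (F : Set M) := by
    intro n x hx
    have hmap : Submodule.map ((LinearMap.lsmul Λ M (T n)).restrictScalars ℤ)
        (Submodule.span ℤ (F : Set M)) ≤ Submodule.span ℤ (F : Set M) := by
      rw [Submodule.map_span]
      apply Submodule.span_le.mpr
      rintro y ⟨z, hz, rfl⟩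
      rw [hF, Finset.coe_image] at hz
      obtain ⟨⟨v, j⟩, hq, rfl⟩ := hz
      rw [Finset.mem_coe, Finset.mem_product] at hq
      simp only [LinearMap.coe_restrictScalars, LinearMap.lsmul_apply]
      rw [smul_T_smul]
      exact hFsub v hq.1 (hwin v _)
    exact hmap ⟨x, hx, rfl⟩
  let SL : Submodule Λ M :=
    { carrier := (Submodule.span ℤ (F : Set M) : Set M)
      add_mem' := fun h1 h2 => Submodule.add_mem _ h1 h2
      zero_mem' := Submodule.zero_mem _
      smul_mem' := by
        intro f x hx
        induction f using LaurentPolynomial.induction_on' with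
        | add f g hf hg =>
            rw [add_smul]
            exact Submodule.add_mem _ hf hg
        | C_mul_T n a =>
            rw [mul_smul, LaurentPolynomial.C_eq_algebraMap, algebraMap_smul]
            exact Submodule.smul_mem _ a (hstable n x hx) }
  have hle : (⊤ : Submodule Λ M) ≤ SL := by
    rw [← hG]
    apply Submodule.span_le.mpr
    intro v hv
    have h0 : (T (0 : ℤ) : Λ) • v = v := by
      rw [LaurentPolynomial.T_zero, one_smul]
    have : v ∈ Submodule.span ℤ (F : Set M) := h0 ▸ hFsub v hv (hwin v 0)
    exact this
  refine ⟨⟨F, ?_⟩⟩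
  refine le_antisymm le_top ?_
  intro x _
  exact hle Submodule.mem_top

open LaurentPolynomial in
lemma base_prime (M : Type) [AddCommGroup M] [Module Λ M] [IsNoetherian Λ M]
    (p : ℕ) (hp : p.Prime)
    (hM : Function.Bijective (fun v : M => (tL - 1) • v))
    (htor : ∀ v : M, p • v = 0) : Module.Finite ℤ M := by
  have hfin : Module.Finite Λ M := ⟨IsNoetherian.noetherian ⊤⟩
  have hφbij : Function.Bijective (LinearMap.lsmul Λ M (tL - 1)) := by
    have : ⇑(LinearMap.lsmul Λ M (tL - 1)) = fun v : M => (tL - 1) • v := by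
      ext v; simp [sub_smul]
    rw [this]; exact hM
  let e : M ≃ₗ[Λ] M := LinearEquiv.ofBijective (LinearMap.lsmul Λ M (tL - 1)) hφbij
  set f : Module.End Λ M := (e.symm : M →ₗ[Λ] M) with hf
  have hef : ∀ v : M, (tL - 1) • (f v) = v := by
    intro v
    exact e.apply_symm_apply v
  obtain ⟨P, hPm, hP0⟩ := LinearMap.exists_monic_and_aeval_eq_zero Λ f
  set n := P.natDegree with hn
  have haux : ∀ (i : ℕ) (v : M), (tL - 1) ^ i • ((f ^ i) v) = v := by
    intro i
    induction i with
    | zero => intro v; simp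
    | succ i ih =>
        intro v
        rw [pow_succ, pow_succ, mul_smul, Module.End.mul_apply]
        have h1 : (tL - 1) • (f ^ i) (f v) = (f ^ i) ((tL - 1) • (f v)) :=
          (map_smul (f ^ i) _ _).symm
        rw [h1, hef, ih]
  have hsum : ∀ v : M, ∑ i ∈ Finset.range (n + 1), P.coeff i • ((f ^ i) v) = 0 := by
    intro v
    have h2 := congrArg (fun g : Module.End Λ M => g v) hP0
    rw [Polynomial.aeval_eq_sum_range] at h2
    simpa using h2
  set w : Λ := ∑ i ∈ Finset.range (n + 1), P.coeff i * (tL - 1) ^ (n - i) with hw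
  have hwann : ∀ v : M, w • v = 0 := by
    intro v
    have key : w • v = (tL - 1) ^ n • (∑ i ∈ Finset.range (n + 1), P.coeff i • ((f ^ i) v)) := by
      rw [Finset.smul_sum, hw, Finset.sum_smul]
      apply Finset.sum_congr rfl
      intro i hi
      have hi' : i ≤ n := by
        have := Finset.mem_range.mp hi; omega
      rw [mul_smul, smul_comm ((tL - 1) ^ n) (P.coeff i)]
      congr 1
      conv_lhs => rw [← haux i v]
      rw [← mul_smul, ← pow_add]
      congr 2
      omega
    rw [key, hsum, smul_zero]
  have hεt : eps (tL - 1) = 0 := by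
    rw [map_sub, map_one, tL, eps_T]; ring
  have hwe : eps w = 1 := by
    rw [hw, map_sum, Finset.sum_eq_single n]
    · rw [map_mul, Nat.sub_self, pow_zero, map_one, mul_one, hn,
        Polynomial.Monic.coeff_natDegree hPm, map_one]
    · intro i hi hne
      have hlt : i < n := by
        have := Finset.mem_range.mp hi; omega
      rw [map_mul, map_pow, hεt, zero_pow (by omega), mul_zero]
    · intro h
      exact absurd (Finset.self_mem_range_succ n) h
  obtain ⟨k, W, hWk⟩ := LaurentPolynomial.exists_T_pow w
  apply finite_of_poly M p hp htor W
  · have h3 : eps (Polynomial.toLaurent W) = 1 := by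
      rw [hWk, map_mul, hwe, eps_T, one_mul]
    rw [eps_toLaurent] at h3; exact h3
  · intro v
    rw [hWk, mul_smul, hwann]

open LaurentPolynomial in
lemma key_induction : ∀ (N : ℕ), 0 < N →
    ∀ (M : Type) [AddCommGroup M] [Module Λ M] [IsNoetherian Λ M],
    Function.Bijective (fun v : M => (tL - 1) • v) → (∀ v : M, N • v = 0) →
    Module.Finite ℤ M := by
  intro N
  induction N using Nat.strong_induction_on with
  | _ N ih =>
    intro hN M _ _ _ hM htor
    by_cases hN1 : N = 1
    · subst hN1
      have hzero : ∀ x : M, x = 0 := by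
        intro x; have := htor x; simpa using this
      refine ⟨⟨∅, ?_⟩⟩
      rw [Finset.coe_empty, Submodule.span_empty]
      refine Submodule.eq_top_iff'.mpr fun x => ?_
      rw [hzero x]; exact Submodule.zero_mem _
    · set p := N.minFac with hp
      have hpp : p.Prime := Nat.minFac_prime hN1
      set S : Submodule Λ M :=
        { carrier := {v : M | p • v = 0}
          add_mem' := fun {a b} ha hb => by
            simp only [Set.mem_setOf_eq] at *
            rw [smul_add, ha, hb, add_zero]
          zero_mem' := by simp
          smul_mem' := fun c v hv => by
            simp only [Set.mem_setOf_eq] at *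
            rw [smul_comm, hv, smul_zero] } with hS
      have memS : ∀ v : M, v ∈ S ↔ p • v = 0 := fun v => Iff.rfl
      -- bijectivity on S
      have bijS : Function.Bijective (fun v : S => (tL - 1) • v) := by
        constructor
        · intro a b h
          apply Subtype.ext
          apply hM.1
          have := congrArg (Subtype.val) h
          simpa using this
        · rintro ⟨v, hv⟩
          obtain ⟨w, hw⟩ := hM.2 v
          have hw' : (tL - 1) • w = v := hw
          have hwS : w ∈ S := by
            rw [memS]
            apply hM.1
            show (tL - 1) • (p • w) = (tL - 1) • (0 : M)
            rw [smul_zero, smul_comm, hw']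
            exact hv
          exact ⟨⟨w, hwS⟩, Subtype.ext hw'⟩
      have torS : ∀ v : S, p • v = 0 := by
        intro v
        apply Subtype.ext
        show ((p • v : S) : M) = 0
        rw [Submodule.coe_smul_of_tower]
        exact v.2
      have finS : Module.Finite ℤ S := base_prime S p hpp bijS torS
      -- the quotient
      have bijQ : Function.Bijective (fun x : M ⧸ S => (tL - 1) • x) := by
        constructor
        · intro x y h
          obtain ⟨u, rfl⟩ := S.mkQ_surjective x
          obtain ⟨v, rfl⟩ := S.mkQ_surjective y
          simp only [Submodule.mkQ_apply] at h ⊢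
          rw [← Submodule.Quotient.mk_smul, ← Submodule.Quotient.mk_smul,
            Submodule.Quotient.eq] at h
          rw [Submodule.Quotient.eq]
          rw [← smul_sub] at h
          have h2 : p • ((tL - 1) • (u - v)) = 0 := h
          rw [memS]
          apply hM.1
          show (tL - 1) • (p • (u - v)) = (tL - 1) • (0 : M)
          rw [smul_zero, smul_comm]
          exact h2
        · intro x
          obtain ⟨v, rfl⟩ := S.mkQ_surjective x
          obtain ⟨w, hw⟩ := hM.2 v
          have hw' : (tL - 1) • w = v := hw
          refine ⟨S.mkQ w, ?_⟩
          simp only [Submodule.mkQ_apply]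
          rw [← Submodule.Quotient.mk_smul, hw']
      have torQ : ∀ x : M ⧸ S, (N / p) • x = 0 := by
        intro x
        obtain ⟨v, rfl⟩ := S.mkQ_surjective x
        rw [← map_nsmul]
        rw [Submodule.mkQ_apply, Submodule.Quotient.mk_eq_zero]
        rw [memS, ← mul_smul, Nat.mul_div_cancel' (Nat.minFac_dvd N)]
        exact htor v
      have hplt : 1 < p := hpp.one_lt
      have hdivlt : N / p < N := Nat.div_lt_self hN hplt
      have hdivpos : 0 < N / p := Nat.div_pos (Nat.minFac_le hN) hpp.pos
      have finQ : Module.Finite ℤ (M ⧸ S) := ih (N / p) hdivlt hdivpos (M ⧸ S) bijQ torQ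
      -- extension
      have hfg : (⊤ : Submodule ℤ M).FG := by
        apply Submodule.fg_of_fg_map_of_fg_inf_ker ((S.mkQ).restrictScalars ℤ)
        · rw [Submodule.map_top, LinearMap.range_eq_top.mpr]
          · exact finQ.fg_top
          · intro x
            obtain ⟨v, hv⟩ := S.mkQ_surjective x
            exact ⟨v, hv⟩
        · rw [top_inf_eq]
          have hker : LinearMap.ker ((S.mkQ).restrictScalars ℤ) = S.restrictScalars ℤ := by
            rw [LinearMap.ker_restrictScalars, Submodule.ker_mkQ]
          rw [hker]
          exact (Submodule.fg_top _).mp finS.fg_top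
      exact ⟨hfg⟩

/-- A Noetherian ℤ-torsion (t−1)-invertible Λ-module is finitely generated over ℤ. -/
theorem zTorsion_invertible_finitely_generated (M : Type) [AddCommGroup M] [Module Λ M]
    [IsNoetherian Λ M]
    (hM : Function.Bijective (fun v : M => (tL - 1) • v))
    (htor : ∀ v : M, ∃ n : ℕ, 0 < n ∧ n • v = 0) :
    Module.Finite ℤ M := by
  classical
  have hfin : Module.Finite Λ M := ⟨IsNoetherian.noetherian ⊤⟩
  obtain ⟨G, hG⟩ := hfin.fg_top
  choose nf hnf1 hnf2 using htor
  set N : ℕ := ∏ v ∈ G, nf v with hN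
  have hNpos : 0 < N := Finset.prod_pos (fun v _ => hnf1 v)
  have hNtor : ∀ v : M, N • v = 0 := by
    set SN : Submodule Λ M :=
      { carrier := {v : M | N • v = 0}
        add_mem' := fun {a b} ha hb => by
          simp only [Set.mem_setOf_eq] at *
          rw [smul_add, ha, hb, add_zero]
        zero_mem' := by simp
        smul_mem' := fun c v hv => by
          simp only [Set.mem_setOf_eq] at *
          rw [smul_comm, hv, smul_zero] } with hSN
    have hle : (⊤ : Submodule Λ M) ≤ SN := by
      rw [← hG]
      apply Submodule.span_le.mpr
      intro v hv
      show N • v = 0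
      obtain ⟨c, hc⟩ := Finset.dvd_prod_of_mem nf hv
      rw [hN, hc, mul_comm, mul_smul, hnf2 v, smul_zero]
    intro v
    exact hle Submodule.mem_top
  exact key_induction N hNpos M hM hNtor
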